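/- arXiv:2605.17747 — 2 statements merged into one kernel-verified Lean document; each statement's English description precedes it below -/
import Mathlib

section
/- Let (L, ∘_λ, [·_λ ·]) be a transposed Poisson conformal superalgebra. Then for all homogeneous x, y, z ∈ L the following identity holds: (−1)^{|x||z|} [x_λ y] ∘_μ z + (−1)^{|x||y|} [y_{μ−λ} z] ∘_{−∂−λ} x + (−1)^{|y||z|} [z_{−∂−λ} x] ∘_{−∂−μ+λ} y = 0. -/
open Polynomial
open scoped TensorProduct

noncomputable section

set_option linter.unusedSectionVars false

namespace TPCSAFormal

/-- The super-sign `(-1)^{i·j}` for parities `i, j ∈ ℤ/2ℤ`. -/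
def sgn (i j : ZMod 2) : ℂ := (-1 : ℂ) ^ (i.val * j.val)

variable (L : Type*) [AddCommGroup L] [Module ℂ L]
  [Module (Polynomial ℂ) L] [IsScalarTower ℂ (Polynomial ℂ) L]

/-- A conformal `λ`-product on the `ℂ[∂]`-module `L`, recorded by its family of `n`-th
product coefficients: `a ∘_λ b = ∑_n λ^n • coeff n a b`, with finitely many nonzero terms.
This is exactly the data of a `ℂ`-bilinear map `L ⊗ L → ℂ[λ] ⊗ L`. -/
structure ConformalProduct where
  coeff : ℕ → L →ₗ[ℂ] L →ₗ[ℂ] L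
  coeff_finite : ∀ a b : L, ∃ N : ℕ, ∀ n : ℕ, N ≤ n → coeff n a b = 0

variable {L}

/-- The value `a ∘_λ b` of the `λ`-product at `λ ∈ ℂ`.  Since `ℂ` is infinite, identities
between such values for all `λ` are equivalent to the corresponding polynomial identities. -/
def ConformalProduct.mul (m : ConformalProduct L) (lam : ℂ) (a b : L) : L :=
  ∑ᶠ n : ℕ, lam ^ n • m.coeff n a b

/-- The value `a ∘_{-∂-λ} b`, where `∂` acts on `L` as scalar multiplication by
`X ∈ ℂ[∂]` (the variable `λ` being replaced by the operator `-∂-λ`). -/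
def ConformalProduct.cmul (m : ConformalProduct L) (lam : ℂ) (a b : L) : L :=
  ∑ᶠ n : ℕ, ((-((X : Polynomial ℂ) + C lam)) ^ n) • m.coeff n a b

variable (L) in
/-- A `ℤ₂`-grading on `L` making it a `ℤ₂`-graded `ℂ[∂]`-module: `L = L₀ ⊕ L₁` with
`∂ L_i ⊆ L_i`, where `∂` acts as multiplication by `X ∈ ℂ[∂]`. -/
structure SuperModule where
  grade : ZMod 2 → Submodule ℂ L
  isInternal : DirectSum.IsInternal grade
  X_smul_mem : ∀ (i : ZMod 2) (a : L), a ∈ grade i → (X : Polynomial ℂ) • a ∈ grade i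

/-- `m` is an even `λ`-product on the `ℤ₂`-graded `ℂ[∂]`-module `(L, S)`:
it is even with respect to the grading and conformally sesquilinear. -/
structure IsLambdaProduct (S : SuperModule L) (m : ConformalProduct L) : Prop where
  even : ∀ (i j : ZMod 2) (a b : L), a ∈ S.grade i → b ∈ S.grade j →
    ∀ n : ℕ, m.coeff n a b ∈ S.grade (i + j)
  sesq_left : ∀ (lam : ℂ) (a b : L),
    m.mul lam ((X : Polynomial ℂ) • a) b = (-lam) • m.mul lam a b
  sesq_right : ∀ (lam : ℂ) (a b : L),
    m.mul lam a ((X : Polynomial ℂ) • b) =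
      (X : Polynomial ℂ) • m.mul lam a b + lam • m.mul lam a b

/-- `(L, S, m)` is a commutative associative conformal superalgebra. -/
structure IsCommAssoc (S : SuperModule L) (m : ConformalProduct L)
    extends IsLambdaProduct S m : Prop where
  comm : ∀ (i j : ZMod 2) (a b : L), a ∈ S.grade i → b ∈ S.grade j →
    ∀ lam : ℂ, m.mul lam a b = sgn i j • m.cmul lam b a
  assoc : ∀ (lam mu : ℂ) (a b c : L),
    m.mul lam a (m.mul mu b c) = m.mul (lam + mu) (m.mul lam a b) c

/-- `(L, S, br)` is a Lie conformal superalgebra. -/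
structure IsLie (S : SuperModule L) (br : ConformalProduct L)
    extends IsLambdaProduct S br : Prop where
  skew : ∀ (i j : ZMod 2) (a b : L), a ∈ S.grade i → b ∈ S.grade j →
    ∀ lam : ℂ, br.mul lam a b = -(sgn i j • br.cmul lam b a)
  jacobi : ∀ (i j : ZMod 2) (a b : L), a ∈ S.grade i → b ∈ S.grade j →
    ∀ (c : L) (lam mu : ℂ),
      br.mul lam a (br.mul mu b c) =
        br.mul (lam + mu) (br.mul lam a b) c + sgn i j • br.mul mu b (br.mul lam a c)

/-- `(L, S, m, br)` is a transposed Poisson conformal superalgebra. -/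
structure IsTPCSA (S : SuperModule L) (m br : ConformalProduct L) : Prop where
  commAssoc : IsCommAssoc S m
  lie : IsLie S br
  transposedLeibniz : ∀ (i j : ZMod 2) (a b : L), a ∈ S.grade i → b ∈ S.grade j →
    ∀ (c : L) (lam mu : ℂ),
      (2 : ℂ) • m.mul lam a (br.mul mu b c) =
        br.mul (lam + mu) (m.mul lam a b) c + sgn i j • br.mul mu b (m.mul lam a c)

/-- `(L, S, m, br)` is a Poisson conformal superalgebra. -/
structure IsPCSA (S : SuperModule L) (m br : ConformalProduct L) : Prop where
  commAssoc : IsCommAssoc S m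
  lie : IsLie S br
  leibniz : ∀ (i j : ZMod 2) (a b : L), a ∈ S.grade i → b ∈ S.grade j →
    ∀ (c : L) (lam mu : ℂ),
      br.mul lam a (m.mul mu b c) =
        m.mul (lam + mu) (br.mul lam a b) c + sgn i j • m.mul mu b (br.mul lam a c)

/-- `(L, S, br, α)` is a Hom-Lie conformal superalgebra. -/
structure IsHomLie (S : SuperModule L) (br : ConformalProduct L) (α : L → L)
    extends IsLambdaProduct S br : Prop where
  map_smul_add : ∀ (c : ℂ) (a b : L), α (c • a + b) = c • α a + α b
  map_grade : ∀ (i : ZMod 2) (a : L), a ∈ S.grade i → α a ∈ S.grade i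
  commute_partial : ∀ a : L, α ((X : Polynomial ℂ) • a) = (X : Polynomial ℂ) • α a
  skew : ∀ (i j : ZMod 2) (a b : L), a ∈ S.grade i → b ∈ S.grade j →
    ∀ lam : ℂ, br.mul lam a b = -(sgn i j • br.cmul lam b a)
  homJacobi : ∀ (i j : ZMod 2) (a b : L), a ∈ S.grade i → b ∈ S.grade j →
    ∀ (c : L) (lam mu : ℂ),
      br.mul lam (α a) (br.mul mu b c) =
        br.mul (lam + mu) (br.mul lam a b) (α c) + sgn i j • br.mul mu (α b) (br.mul lam a c)

/-- `(L, S, p)` is a left-symmetric conformal superalgebra. -/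
structure IsLeftSymmetric (S : SuperModule L) (p : ConformalProduct L)
    extends IsLambdaProduct S p : Prop where
  leftSym : ∀ (i j : ZMod 2) (a b : L), a ∈ S.grade i → b ∈ S.grade j →
    ∀ (c : L) (lam mu : ℂ),
      p.mul (lam + mu) (p.mul lam a b) c - p.mul lam a (p.mul mu b c) =
        sgn i j • (p.mul (lam + mu) (p.mul mu b a) c - p.mul mu b (p.mul lam a c))

/-- `(L, S, p)` is a (left) Novikov conformal superalgebra. -/
structure IsNovikov (S : SuperModule L) (p : ConformalProduct L)
    extends IsLeftSymmetric S p : Prop where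
  novikov : ∀ (j k : ZMod 2) (b c : L), b ∈ S.grade j → c ∈ S.grade k →
    ∀ (a : L) (lam mu : ℂ),
      p.mul (lam + mu) (p.mul lam a b) c = sgn j k • p.cmul mu (p.mul lam a c) b

/-- `(L, S, mc, p)` is a Novikov-Poisson conformal superalgebra. -/
structure IsNovikovPoisson (S : SuperModule L) (mc p : ConformalProduct L) : Prop where
  commAssoc : IsCommAssoc S mc
  novikov : IsNovikov S p
  compat₁ : ∀ (lam mu : ℂ) (a b c : L),
    p.mul (lam + mu) (mc.mul lam a b) c = mc.mul lam a (p.mul mu b c)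
  compat₂ : ∀ (i j : ZMod 2) (a b : L), a ∈ S.grade i → b ∈ S.grade j →
    ∀ (c : L) (lam mu : ℂ),
      mc.mul (lam + mu) (p.mul lam a b) c - p.mul lam a (mc.mul mu b c) =
        sgn i j • (mc.mul (lam + mu) (p.mul mu b a) c - p.mul mu b (mc.mul lam a c))

/-- `(L, S, mc, p)` is a pre-Lie commutative conformal superalgebra. -/
structure IsPreLieComm (S : SuperModule L) (mc p : ConformalProduct L) : Prop where
  commAssoc : IsCommAssoc S mc
  leftSymmetric : IsLeftSymmetric S p
  compat : ∀ (i j : ZMod 2) (a b : L), a ∈ S.grade i → b ∈ S.grade j →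
    ∀ (c : L) (lam mu : ℂ),
      p.mul lam a (mc.mul mu b c) =
        mc.mul (lam + mu) (p.mul lam a b) c + sgn i j • mc.mul mu b (p.mul lam a c)

/-- `(L, S, mc, p)` is a pre-Lie Poisson conformal superalgebra. -/
structure IsPreLiePoisson (S : SuperModule L) (mc p : ConformalProduct L) : Prop where
  commAssoc : IsCommAssoc S mc
  leftSymmetric : IsLeftSymmetric S p
  compat₁ : ∀ (lam mu : ℂ) (a b c : L),
    p.mul (lam + mu) (mc.mul lam a b) c = mc.mul lam a (p.mul mu b c)
  compat₂ : ∀ (i j : ZMod 2) (a b : L), a ∈ S.grade i → b ∈ S.grade j →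
    ∀ (c : L) (lam mu : ℂ),
      mc.mul (lam + mu) (p.mul lam a b) c - p.mul lam a (mc.mul mu b c) =
        sgn i j • (mc.mul (lam + mu) (p.mul mu b a) c - p.mul mu b (mc.mul lam a c))


/- ======================= Auxiliary development ======================= -/

section AuxSigns

lemma sgn_sq (i j : ZMod 2) : sgn i j * sgn i j = 1 := by
  have h2 : ∀ x : ZMod 2, x = 0 ∨ x = 1 := by decide
  rcases h2 i with rfl | rfl <;> rcases h2 j with rfl | rfl <;>
    norm_num [sgn, show ZMod.val (1:ZMod 2) = 1 from rfl, show ZMod.val (0:ZMod 2) = 0 from rfl]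

lemma sgn_comm (i j : ZMod 2) : sgn i j = sgn j i := by simp [sgn, Nat.mul_comm]

lemma sgn_add_right (i j k : ZMod 2) : sgn i (j + k) = sgn i j * sgn i k := by
  have h2 : ∀ x : ZMod 2, x = 0 ∨ x = 1 := by decide
  rcases h2 i with rfl | rfl <;> rcases h2 j with rfl | rfl <;> rcases h2 k with rfl | rfl <;>
    norm_num [sgn, show ZMod.val (1:ZMod 2) = 1 from rfl, show ZMod.val (0:ZMod 2) = 0 from rfl,
      show ((1:ZMod 2)+1) = 0 from rfl, show ZMod.val (2:ZMod 2) = 0 from rfl]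

lemma sgn_add_left (i j k : ZMod 2) : sgn (i + j) k = sgn i k * sgn j k := by
  have h2 : ∀ x : ZMod 2, x = 0 ∨ x = 1 := by decide
  rcases h2 i with rfl | rfl <;> rcases h2 j with rfl | rfl <;> rcases h2 k with rfl | rfl <;>
    norm_num [sgn, show ZMod.val (1:ZMod 2) = 1 from rfl, show ZMod.val (0:ZMod 2) = 0 from rfl,
      show ((1:ZMod 2)+1) = 0 from rfl, show ZMod.val (2:ZMod 2) = 0 from rfl]

lemma sgn_cases (i j : ZMod 2) : sgn i j = 1 ∨ sgn i j = -1 := by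
  have h2 : ∀ x : ZMod 2, x = 0 ∨ x = 1 := by decide
  rcases h2 i with rfl | rfl <;> rcases h2 j with rfl | rfl <;>
    norm_num [sgn, show ZMod.val (1:ZMod 2) = 1 from rfl, show ZMod.val (0:ZMod 2) = 0 from rfl]

end AuxSigns

section AuxPoly

lemma C_smul' (c : ℂ) (v : L) : (C c) • v = c • v := by
  rw [← Polynomial.algebraMap_eq, algebraMap_smul]

/-- Flip an equation `u = c • v` with `c * c = 1`. -/
lemma flip_smul {c : ℂ} (hc : c * c = 1) {u v : L} (h : u = c • v) : v = c • u := by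
  rw [h, smul_smul, hc, one_smul]

lemma pad_sum {β : Type*} [AddCommMonoid β] {N N' : ℕ} (h : N ≤ N') (G : ℕ → L → β)
    (hG : ∀ n, G n 0 = 0) (f : ℕ → L) :
    ∑ n ∈ Finset.range N, G n (f n)
      = ∑ n ∈ Finset.range N', G n (if n < N then f n else 0) := by
  have h1 : ∑ n ∈ Finset.range N', G n (if n < N then f n else 0)
      = ∑ n ∈ Finset.range N, G n (if n < N then f n else 0) :=
    (Finset.sum_subset (Finset.range_subset_range.2 h) (fun n _ hn => by
        rw [if_neg (by simpa using hn), hG])).symm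
  rw [h1]
  exact Finset.sum_congr rfl fun n hn => by rw [if_pos (Finset.mem_range.1 hn)]

lemma coeffs_zero {N : ℕ} {d : ℕ → L}
    (h : ∀ ν : ℂ, ∑ n ∈ Finset.range N, ν ^ n • d n = 0) :
    ∀ n ∈ Finset.range N, d n = 0 := by
  intro n hn
  rw [← Module.forall_dual_apply_eq_zero_iff ℂ]
  intro φ
  have hp : (∑ k ∈ Finset.range N, C (φ (d k)) * X ^ k : Polynomial ℂ) = 0 := by
    apply Polynomial.funext
    intro ν
    have hφ := congrArg φ (h ν)
    simp only [map_sum, map_smul, smul_eq_mul, map_zero] at hφ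
    simp only [Polynomial.eval_finset_sum, Polynomial.eval_mul, Polynomial.eval_pow,
      Polynomial.eval_C, Polynomial.eval_X, Polynomial.eval_zero]
    calc ∑ k ∈ Finset.range N, φ (d k) * ν ^ k
        = ∑ k ∈ Finset.range N, ν ^ k * φ (d k) :=
          Finset.sum_congr rfl fun k _ => mul_comm _ _
      _ = 0 := hφ
  have h2 := congrArg (fun p : Polynomial ℂ => p.coeff n) hp
  simp only [Polynomial.finset_sum_coeff, Polynomial.coeff_C_mul, Polynomial.coeff_X_pow,
    Polynomial.coeff_zero, mul_ite, mul_one, mul_zero] at h2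
  rw [Finset.sum_ite_eq (Finset.range N) n (fun k => φ (d k)), if_pos hn] at h2
  exact h2

end AuxPoly

section AuxExtends

/-- `a` is the value at `q ∈ ℂ[X]` of the canonical extension of the polynomial map `F : ℂ → L`. -/
def Extends (q : Polynomial ℂ) (F : ℂ → L) (a : L) : Prop :=
  ∃ (N : ℕ) (f : ℕ → L), (∀ ν : ℂ, F ν = ∑ n ∈ Finset.range N, ν ^ n • f n) ∧
    a = ∑ n ∈ Finset.range N, q ^ n • f n

lemma Extends.zero (q : Polynomial ℂ) : Extends (L := L) q (fun _ => 0) 0 :=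
  ⟨0, fun _ => 0, by simp, by simp⟩

lemma Extends.add {q : Polynomial ℂ} {F G : ℂ → L} {a b : L}
    (hF : Extends q F a) (hG : Extends q G b) :
    Extends q (fun ν => F ν + G ν) (a + b) := by
  obtain ⟨N₁, f, hf, ha⟩ := hF
  obtain ⟨N₂, g, hg, hb⟩ := hG
  refine ⟨max N₁ N₂, fun n => (if n < N₁ then f n else 0) + (if n < N₂ then g n else 0), ?_, ?_⟩
  · intro ν
    show F ν + G ν = _
    simp only [smul_add, Finset.sum_add_distrib]
    rw [hf, hg,
      pad_sum (le_max_left N₁ N₂) (fun n v => ν ^ n • v) (fun n => smul_zero _) f,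
      pad_sum (le_max_right N₁ N₂) (fun n v => ν ^ n • v) (fun n => smul_zero _) g]
  · simp only [smul_add, Finset.sum_add_distrib]
    rw [ha, hb,
      pad_sum (le_max_left N₁ N₂) (fun n v => q ^ n • v) (fun n => smul_zero _) f,
      pad_sum (le_max_right N₁ N₂) (fun n v => q ^ n • v) (fun n => smul_zero _) g]

lemma Extends.csmul {q : Polynomial ℂ} {F : ℂ → L} {a : L} (c : ℂ) (h : Extends q F a) :
    Extends q (fun ν => c • F ν) (c • a) := by
  obtain ⟨N, f, hf, ha⟩ := h
  refine ⟨N, fun n => c • f n, fun ν => ?_, ?_⟩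
  · show c • F ν = _
    rw [hf, Finset.smul_sum]
    exact Finset.sum_congr rfl fun n _ => smul_comm _ _ _
  · rw [ha, Finset.smul_sum]
    exact Finset.sum_congr rfl fun n _ => smul_comm _ _ _

lemma Extends.congr {q : Polynomial ℂ} {F G : ℂ → L} {a : L}
    (h : Extends q F a) (hFG : ∀ ν, G ν = F ν) : Extends q G a := by
  obtain ⟨N, f, hf, ha⟩ := h
  exact ⟨N, f, fun ν => (hFG ν).trans (hf ν), ha⟩

lemma Extends.finsetSum {q : Polynomial ℂ} {ι : Type*} (s : Finset ι) (F : ι → ℂ → L) (a : ι → L)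
    (h : ∀ i ∈ s, Extends q (F i) (a i)) :
    Extends q (fun ν => ∑ i ∈ s, F i ν) (∑ i ∈ s, a i) := by
  classical
  revert h
  induction s using Finset.induction_on with
  | empty => intro _; simpa using Extends.zero (L := L) q
  | @insert x s' hx ih =>
      intro h
      have h1 := (h x (Finset.mem_insert_self x s')).add
        (ih fun i hi => h i (Finset.mem_insert_of_mem hi))
      simpa [Finset.sum_insert hx] using h1

lemma Extends.unique {q : Polynomial ℂ} {F G : ℂ → L} {a b : L} (hFG : ∀ ν, F ν = G ν)
    (hF : Extends q F a) (hG : Extends q G b) : a = b := by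
  obtain ⟨N₁, f, hf, ha⟩ := hF
  obtain ⟨N₂, g, hg, hb⟩ := hG
  have hkey : ∀ n ∈ Finset.range (max N₁ N₂),
      (if n < N₁ then f n else 0) - (if n < N₂ then g n else 0) = 0 := by
    apply coeffs_zero
    intro ν
    have e1 : ∑ n ∈ Finset.range (max N₁ N₂), ν ^ n • (if n < N₁ then f n else 0)
        = ∑ n ∈ Finset.range (max N₁ N₂), ν ^ n • (if n < N₂ then g n else 0) := by
      rw [← pad_sum (le_max_left N₁ N₂) (fun n v => ν ^ n • v) (fun n => smul_zero _) f,
        ← pad_sum (le_max_right N₁ N₂) (fun n v => ν ^ n • v) (fun n => smul_zero _) g,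
        ← hf, ← hg, hFG]
    simp only [smul_sub, Finset.sum_sub_distrib, e1, sub_self]
  rw [ha, hb,
    pad_sum (le_max_left N₁ N₂) (fun n v => q ^ n • v) (fun n => smul_zero _) f,
    pad_sum (le_max_right N₁ N₂) (fun n v => q ^ n • v) (fun n => smul_zero _) g]
  exact Finset.sum_congr rfl fun n hn => by rw [sub_eq_zero.1 (hkey n hn)]

lemma Extends.atom (q : Polynomial ℂ) (R : Polynomial (Polynomial ℂ)) (v : L) :
    Extends q (fun ν => (R.eval (C ν)) • v) ((R.eval q) • v) := by
  refine ⟨R.natDegree + 1, fun n => (R.coeff n) • v, fun ν => ?_, ?_⟩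
  · show R.eval (C ν) • v = _
    rw [Polynomial.eval_eq_sum_range, Finset.sum_smul]
    refine Finset.sum_congr rfl fun n _ => ?_
    rw [mul_comm, mul_smul, ← map_pow, C_smul']
  · rw [Polynomial.eval_eq_sum_range, Finset.sum_smul]
    exact Finset.sum_congr rfl fun n _ => by rw [mul_comm, mul_smul]

end AuxExtends


section AuxConformal

namespace ConformalProduct

variable (m : ConformalProduct L)

lemma finsum_smul_eq_sum {α : Type*} [AddCommMonoid α] (g : ℕ → α) {N : ℕ}
    (h0 : ∀ n, N ≤ n → g n = 0) : ∑ᶠ n, g n = ∑ n ∈ Finset.range N, g n := by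
  refine finsum_eq_sum_of_support_subset _ fun n hn => ?_
  simp only [Finset.coe_range, Set.mem_Iio]
  by_contra h
  exact hn (h0 n (not_lt.1 h))

lemma mul_eq_sum {a b : L} {N : ℕ} (hN : ∀ n, N ≤ n → m.coeff n a b = 0) (lam : ℂ) :
    m.mul lam a b = ∑ n ∈ Finset.range N, lam ^ n • m.coeff n a b :=
  finsum_smul_eq_sum _ fun n hn => by rw [hN n hn, smul_zero]

lemma cmul_eq_sum {a b : L} {N : ℕ} (hN : ∀ n, N ≤ n → m.coeff n a b = 0) (lam : ℂ) :
    m.cmul lam a b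
      = ∑ n ∈ Finset.range N, ((-((X : Polynomial ℂ) + C lam)) ^ n) • m.coeff n a b :=
  finsum_smul_eq_sum _ fun n hn => by rw [hN n hn, smul_zero]

lemma support_mul_fin (lam : ℂ) (a b : L) :
    (Function.support fun n => lam ^ n • m.coeff n a b).Finite := by
  obtain ⟨N, hN⟩ := m.coeff_finite a b
  refine Set.Finite.subset (Finset.range N).finite_toSet fun n hn => ?_
  simp only [Finset.coe_range, Set.mem_Iio]
  by_contra h
  exact hn (show (fun n => lam ^ n • m.coeff n a b) n = 0 by
    simp only []
    rw [hN n (not_lt.1 h), smul_zero])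

lemma mul_zero_right (lam : ℂ) (a : L) : m.mul lam a 0 = 0 := by
  unfold ConformalProduct.mul
  simp

lemma mul_zero_left (lam : ℂ) (b : L) : m.mul lam 0 b = 0 := by
  unfold ConformalProduct.mul
  simp

lemma mul_add_right (lam : ℂ) (a b₁ b₂ : L) :
    m.mul lam a (b₁ + b₂) = m.mul lam a b₁ + m.mul lam a b₂ := by
  unfold ConformalProduct.mul
  rw [← finsum_add_distrib (m.support_mul_fin lam a b₁) (m.support_mul_fin lam a b₂)]
  exact finsum_congr fun n => by rw [map_add, smul_add]

lemma mul_add_left (lam : ℂ) (a₁ a₂ b : L) :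
    m.mul lam (a₁ + a₂) b = m.mul lam a₁ b + m.mul lam a₂ b := by
  unfold ConformalProduct.mul
  rw [← finsum_add_distrib (m.support_mul_fin lam a₁ b) (m.support_mul_fin lam a₂ b)]
  exact finsum_congr fun n => by rw [map_add, LinearMap.add_apply, smul_add]

lemma mul_smul_right (lam : ℂ) (c : ℂ) (a b : L) :
    m.mul lam a (c • b) = c • m.mul lam a b := by
  unfold ConformalProduct.mul
  rw [smul_finsum' c (m.support_mul_fin lam a b)]
  exact finsum_congr fun n => by rw [map_smul, smul_comm]

lemma mul_smul_left (lam : ℂ) (c : ℂ) (a b : L) :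
    m.mul lam (c • a) b = c • m.mul lam a b := by
  unfold ConformalProduct.mul
  rw [smul_finsum' c (m.support_mul_fin lam a b)]
  exact finsum_congr fun n => by rw [map_smul, LinearMap.smul_apply, smul_comm]

lemma cmul_smul_left (lam : ℂ) (c : ℂ) (a b : L) :
    m.cmul lam (c • a) b = c • m.cmul lam a b := by
  unfold ConformalProduct.cmul
  obtain ⟨N, hN⟩ := m.coeff_finite a b
  rw [finsum_smul_eq_sum _ (fun n hn => by rw [map_smul, LinearMap.smul_apply, hN n hn, smul_zero, smul_zero]),
    finsum_smul_eq_sum (N := N) _ (fun n hn => by rw [hN n hn, smul_zero]), Finset.smul_sum]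
  exact Finset.sum_congr rfl fun n _ => by rw [map_smul, LinearMap.smul_apply, smul_comm]

lemma mul_sum_right {ι : Type*} (lam : ℂ) (a : L) (s : Finset ι) (b : ι → L) :
    m.mul lam a (∑ i ∈ s, b i) = ∑ i ∈ s, m.mul lam a (b i) := by
  classical
  induction s using Finset.induction_on with
  | empty => simp [m.mul_zero_right]
  | @insert x s' hx ih =>
      rw [Finset.sum_insert hx, Finset.sum_insert hx, m.mul_add_right, ih]

lemma mul_sum_left {ι : Type*} (lam : ℂ) (s : Finset ι) (a : ι → L) (b : L) :
    m.mul lam (∑ i ∈ s, a i) b = ∑ i ∈ s, m.mul lam (a i) b := by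
  classical
  induction s using Finset.induction_on with
  | empty => simp [m.mul_zero_left]
  | @insert x s' hx ih =>
      rw [Finset.sum_insert hx, Finset.sum_insert hx, m.mul_add_left, ih]

lemma extends_mul (q : Polynomial ℂ) (a b : L) :
    Extends q (fun ν => m.mul ν a b) (∑ᶠ n, q ^ n • m.coeff n a b) := by
  obtain ⟨N, hN⟩ := m.coeff_finite a b
  exact ⟨N, fun n => m.coeff n a b, fun ν => m.mul_eq_sum hN ν,
    finsum_smul_eq_sum _ fun n hn => by rw [hN n hn, smul_zero]⟩

lemma cmul_def (lam : ℂ) (a b : L) :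
    m.cmul lam a b = ∑ᶠ n, (-((X : Polynomial ℂ) + C lam)) ^ n • m.coeff n a b := rfl

lemma mul_X_pow_left
    (hs : ∀ (lam : ℂ) (a b : L), m.mul lam ((X : Polynomial ℂ) • a) b = (-lam) • m.mul lam a b)
    (lam : ℂ) (n : ℕ) (a b : L) :
    m.mul lam (((X : Polynomial ℂ) ^ n) • a) b = ((-lam) ^ n) • m.mul lam a b := by
  induction n generalizing a with
  | zero => simp
  | succ n ih =>
      rw [pow_succ, mul_smul, ih, hs, smul_smul, ← pow_succ]

lemma mul_poly_left
    (hs : ∀ (lam : ℂ) (a b : L), m.mul lam ((X : Polynomial ℂ) • a) b = (-lam) • m.mul lam a b)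
    (lam : ℂ) (P : Polynomial ℂ) (a b : L) :
    m.mul lam (P • a) b = (P.eval (-lam)) • m.mul lam a b := by
  induction P using Polynomial.induction_on' with
  | add p q hp hq => rw [add_smul, m.mul_add_left, hp, hq, Polynomial.eval_add, add_smul]
  | monomial n c =>
      rw [← Polynomial.C_mul_X_pow_eq_monomial, mul_smul, C_smul', m.mul_smul_left,
        m.mul_X_pow_left hs, Polynomial.eval_mul, Polynomial.eval_C, Polynomial.eval_pow,
        Polynomial.eval_X, smul_smul]

lemma mul_X_right'
    (hs2 : ∀ (lam : ℂ) (a b : L), m.mul lam a ((X : Polynomial ℂ) • b)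
      = (X : Polynomial ℂ) • m.mul lam a b + lam • m.mul lam a b)
    (lam : ℂ) (a b : L) :
    m.mul lam a ((X : Polynomial ℂ) • b) = ((X + C lam : Polynomial ℂ)) • m.mul lam a b := by
  rw [hs2, add_smul, C_smul']

lemma mul_X_pow_right
    (hs2 : ∀ (lam : ℂ) (a b : L), m.mul lam a ((X : Polynomial ℂ) • b)
      = (X : Polynomial ℂ) • m.mul lam a b + lam • m.mul lam a b)
    (lam : ℂ) (n : ℕ) (a b : L) :
    m.mul lam a (((X : Polynomial ℂ) ^ n) • b)
      = (((X + C lam : Polynomial ℂ)) ^ n) • m.mul lam a b := by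
  induction n generalizing b with
  | zero => simp
  | succ n ih =>
      rw [pow_succ, mul_smul, ih, m.mul_X_right' hs2, smul_smul, ← pow_succ]

lemma mul_poly_right
    (hs2 : ∀ (lam : ℂ) (a b : L), m.mul lam a ((X : Polynomial ℂ) • b)
      = (X : Polynomial ℂ) • m.mul lam a b + lam • m.mul lam a b)
    (lam : ℂ) (P : Polynomial ℂ) (a b : L) :
    m.mul lam a (P • b) = (P.comp (X + C lam)) • m.mul lam a b := by
  induction P using Polynomial.induction_on' with
  | add p q hp hq => rw [add_smul, m.mul_add_right, hp, hq, Polynomial.add_comp, add_smul]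
  | monomial n c =>
      rw [← Polynomial.C_mul_X_pow_eq_monomial, mul_smul, C_smul', m.mul_smul_right,
        m.mul_X_pow_right hs2, Polynomial.mul_comp, Polynomial.C_comp, Polynomial.pow_comp,
        Polynomial.X_comp, mul_smul, C_smul']

end ConformalProduct

lemma mul_mem_grade {S : SuperModule L} {m : ConformalProduct L}
    (he : ∀ (i j : ZMod 2) (a b : L), a ∈ S.grade i → b ∈ S.grade j →
      ∀ n : ℕ, m.coeff n a b ∈ S.grade (i + j))
    {i j : ZMod 2} {a b : L} (ha : a ∈ S.grade i) (hb : b ∈ S.grade j) (lam : ℂ) :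
    m.mul lam a b ∈ S.grade (i + j) := by
  obtain ⟨N, hN⟩ := m.coeff_finite a b
  rw [m.mul_eq_sum hN]
  exact Submodule.sum_mem _ fun n _ => Submodule.smul_mem _ _ (he i j a b ha hb n)

end AuxConformal


/-- the cyclic identity (3.15) in a transposed Poisson conformal superalgebra. -/
theorem statement_1 (S : SuperModule L) (m br : ConformalProduct L)
    (hT : IsTPCSA S m br) (i j k : ZMod 2) (x y z : L)
    (hx : x ∈ S.grade i) (hy : y ∈ S.grade j) (hz : z ∈ S.grade k) (lam mu : ℂ) :
    sgn i k • m.mul mu (br.mul lam x y) z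
      + sgn i j • m.cmul lam (br.mul (mu - lam) y z) x
      + sgn j k • m.cmul (mu - lam) (br.cmul lam z x) y = 0 := by
  classical
  obtain ⟨hCA, hLie, hTL⟩ := hT
  have hmE := hCA.toIsLambdaProduct.even
  have hbE := hLie.toIsLambdaProduct.even
  have hcomm := hCA.comm
  have hskew := hLie.skew
  have hbsl := hLie.toIsLambdaProduct.sesq_left
  have hbsr := hLie.toIsLambdaProduct.sesq_right
  -- grade memberships
  have hw0 : br.mul lam x y ∈ S.grade (i + j) := mul_mem_grade hbE hx hy lam
  have hw : br.mul (mu - lam) y z ∈ S.grade (j + k) := mul_mem_grade hbE hy hz (mu - lam)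
  have hu : br.mul lam x z ∈ S.grade (i + k) := mul_mem_grade hbE hx hz lam
  -- complex-level rewrites of the three goal terms
  have hA : m.mul mu (br.mul lam x y) z = sgn (i+j) k • m.cmul mu z (br.mul lam x y) :=
    hcomm (i+j) k _ z hw0 hz mu
  have hT2 : m.cmul lam (br.mul (mu - lam) y z) x
      = sgn i (j+k) • m.mul lam x (br.mul (mu - lam) y z) :=
    flip_smul (sgn_sq i (j+k)) (hcomm i (j+k) x _ hx hw lam)
  have hV : br.cmul lam z x = (-sgn i k) • br.mul lam x z := by
    rw [hskew i k x z hx hz lam, smul_neg, neg_smul, neg_neg, smul_smul, sgn_sq, one_smul]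
  have hT3 : m.cmul (mu - lam) (br.cmul lam z x) y
      = (-sgn i k) • (sgn j (i+k) • m.mul (mu - lam) y (br.mul lam x z)) := by
    rw [hV, m.cmul_smul_left]
    congr 1
    exact flip_smul (sgn_sq j (i+k)) (hcomm j (i+k) y _ hy hu (mu - lam))
  -- bounds
  obtain ⟨Nzx, hNzx⟩ := m.coeff_finite z x
  obtain ⟨Nzy, hNzy⟩ := m.coeff_finite z y
  obtain ⟨Nyz, hNyz⟩ := m.coeff_finite y z
  obtain ⟨Nxz, hNxz⟩ := m.coeff_finite x z
  obtain ⟨Nxy, hNxy⟩ := m.coeff_finite x y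
  set NH := (Finset.range Nzx).sup (fun p => (br.coeff_finite (m.coeff p z x) y).choose)
    with hNHdef
  have hNH : ∀ p ∈ Finset.range Nzx, ∀ n, NH ≤ n → br.coeff n (m.coeff p z x) y = 0 := by
    intro p hp n hn
    refine (br.coeff_finite (m.coeff p z x) y).choose_spec n (le_trans ?_ hn)
    rw [hNHdef]
    exact Finset.le_sup (f := fun p => (br.coeff_finite (m.coeff p z x) y).choose) hp
  set NB := (Finset.range Nxz).sup (fun p => (br.coeff_finite y (m.coeff p x z)).choose)
    with hNBdef
  have hNB : ∀ p ∈ Finset.range Nxz, ∀ n, NB ≤ n → br.coeff n y (m.coeff p x z) = 0 := by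
    intro p hp n hn
    refine (br.coeff_finite y (m.coeff p x z)).choose_spec n (le_trans ?_ hn)
    rw [hNBdef]
    exact Finset.le_sup (f := fun p => (br.coeff_finite y (m.coeff p x z)).choose) hp
  set q : Polynomial ℂ := -(X + C mu) with hqdef
  set Rn : ℕ → Polynomial (Polynomial ℂ) :=
    fun n => (-(C (X : Polynomial ℂ) + (X : Polynomial (Polynomial ℂ)) + C (C lam))) ^ n
    with hRndef
  set Spn : ℕ → ℕ → Polynomial (Polynomial ℂ) :=
    fun p n => (X : Polynomial (Polynomial ℂ)) ^ p
      * ((X : Polynomial (Polynomial ℂ)) + C (C lam)) ^ n with hSdef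
  set E1 : L := ∑ p ∈ Finset.range Nzx, ∑ n ∈ Finset.range NH,
      ((Spn p n).eval q) • br.coeff n (m.coeff p z x) y with hE1def
  set E2 : L := ∑ p ∈ Finset.range Nzy, q ^ p • br.mul lam x (m.coeff p z y) with hE2def
  -- extension of the LHS of the Leibniz rule
  have extLHS : Extends q (fun ν => (2:ℂ) • m.mul ν z (br.mul lam x y))
      ((2:ℂ) • m.cmul mu z (br.mul lam x y)) := by
    have h0 := (m.extends_mul q z (br.mul lam x y)).csmul 2
    have heq : m.cmul mu z (br.mul lam x y) = ∑ᶠ n, q ^ n • m.coeff n z (br.mul lam x y) := by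
      rw [hqdef]; rfl
    rwa [← heq] at h0
  -- first representation of the first RHS term
  have hHrep1 : Extends q (fun ν => br.mul (ν + lam) (m.mul ν z x) y) E1 := by
    have base : Extends q
        (fun ν => ∑ p ∈ Finset.range Nzx, ∑ n ∈ Finset.range NH,
          ((Spn p n).eval (C ν)) • br.coeff n (m.coeff p z x) y) E1 := by
      rw [hE1def]
      exact Extends.finsetSum _ _ _ (fun p _ => Extends.finsetSum _ _ _
        (fun n _ => Extends.atom q (Spn p n) _))
    refine base.congr fun ν => ?_
    rw [m.mul_eq_sum hNzx ν, br.mul_sum_left]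
    refine Finset.sum_congr rfl fun p hp => ?_
    rw [br.mul_smul_left, br.mul_eq_sum (hNH p hp) (ν + lam), Finset.smul_sum]
    refine Finset.sum_congr rfl fun n _ => ?_
    have hev : (Spn p n).eval (C ν) = C (ν ^ p * (ν + lam) ^ n) := by
      rw [hSdef]
      simp only [Polynomial.eval_mul, Polynomial.eval_pow, Polynomial.eval_add,
        Polynomial.eval_X, Polynomial.eval_C, ← map_add, ← map_pow, ← map_mul]
    rw [smul_smul, hev, C_smul']
  -- second representation of the first RHS term
  have hc' : ∀ p, m.coeff p x z ∈ S.grade (i + k) := fun p => hmE i k x z hx hz p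
  have hHrep2 : Extends q (fun ν => br.mul (ν + lam) (m.mul ν z x) y)
      ((-(sgn k i * sgn (i+k) j)) • ∑ p ∈ Finset.range Nxz, ∑ n ∈ Finset.range NB,
        ((Rn n).eval q) • (lam ^ p • br.coeff n y (m.coeff p x z))) := by
    have base : Extends q
        (fun ν => (-(sgn k i * sgn (i+k) j)) • ∑ p ∈ Finset.range Nxz, ∑ n ∈ Finset.range NB,
          ((Rn n).eval (C ν)) • (lam ^ p • br.coeff n y (m.coeff p x z)))
        ((-(sgn k i * sgn (i+k) j)) • ∑ p ∈ Finset.range Nxz, ∑ n ∈ Finset.range NB,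
          ((Rn n).eval q) • (lam ^ p • br.coeff n y (m.coeff p x z))) :=
      (Extends.finsetSum _ _ _ (fun p _ => Extends.finsetSum _ _ _
        (fun n _ => Extends.atom q (Rn n) _))).csmul _
    refine base.congr fun ν => ?_
    have hstep : ∀ p ∈ Finset.range Nxz,
        br.mul (ν + lam) (((-((X : Polynomial ℂ) + C ν)) ^ p) • m.coeff p x z) y
          = (-(sgn (i+k) j)) • ∑ n ∈ Finset.range NB,
              ((Rn n).eval (C ν)) • (lam ^ p • br.coeff n y (m.coeff p x z)) := by
      intro p hp
      rw [br.mul_poly_left hbsl]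
      have heval : (((-((X : Polynomial ℂ) + C ν)) ^ p)).eval (-(ν + lam)) = lam ^ p := by
        simp only [Polynomial.eval_pow, Polynomial.eval_neg, Polynomial.eval_add,
          Polynomial.eval_X, Polynomial.eval_C]
        ring
      rw [heval, hskew (i+k) j _ y (hc' p) hy (ν + lam),
        br.cmul_eq_sum (fun n hn => hNB p hp n hn) (ν + lam)]
      rw [smul_neg, neg_smul]
      congr 1
      rw [smul_comm]
      congr 1
      rw [Finset.smul_sum]
      refine Finset.sum_congr rfl fun n _ => ?_
      have hRev : (Rn n).eval (C ν) = (-((X : Polynomial ℂ) + C (ν + lam))) ^ n := by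
        rw [hRndef]
        simp only [Polynomial.eval_pow, Polynomial.eval_neg, Polynomial.eval_add,
          Polynomial.eval_X, Polynomial.eval_C]
        congr 2
        rw [map_add]
        ring
      rw [hRev, smul_comm]
    rw [hcomm k i z x hz hx ν, br.mul_smul_left, m.cmul_eq_sum hNxz, br.mul_sum_left,
      Finset.sum_congr rfl hstep, ← Finset.smul_sum, smul_smul, mul_neg]
  -- representations of the second RHS term
  have hFrep1 : Extends q (fun ν => br.mul lam x (m.mul ν z y)) E2 := by
    refine ⟨Nzy, fun p => br.mul lam x (m.coeff p z y), fun ν => ?_, hE2def⟩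
    show br.mul lam x (m.mul ν z y)
      = ∑ n ∈ Finset.range Nzy, ν ^ n • br.mul lam x (m.coeff n z y)
    rw [m.mul_eq_sum hNzy ν, br.mul_sum_right]
    exact Finset.sum_congr rfl fun p _ => br.mul_smul_right lam _ x _
  have hFrep2 : Extends q (fun ν => br.mul lam x (m.mul ν z y))
      (sgn k j • ∑ n ∈ Finset.range Nyz, ((Rn n).eval q) • br.mul lam x (m.coeff n y z)) := by
    have base : Extends q
        (fun ν => sgn k j • ∑ n ∈ Finset.range Nyz,
          ((Rn n).eval (C ν)) • br.mul lam x (m.coeff n y z))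
        (sgn k j • ∑ n ∈ Finset.range Nyz, ((Rn n).eval q) • br.mul lam x (m.coeff n y z)) :=
      (Extends.finsetSum _ _ _ (fun n _ => Extends.atom q (Rn n) _)).csmul _
    refine base.congr fun ν => ?_
    show br.mul lam x (m.mul ν z y) = _
    rw [hcomm k j z y hz hy ν, br.mul_smul_right, m.cmul_eq_sum hNyz, br.mul_sum_right]
    congr 1
    refine Finset.sum_congr rfl fun n _ => ?_
    rw [br.mul_poly_right hbsr]
    congr 1
    rw [hRndef]
    simp only [Polynomial.pow_comp, Polynomial.neg_comp, Polynomial.add_comp,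
      Polynomial.X_comp, Polynomial.C_comp, Polynomial.eval_pow, Polynomial.eval_neg,
      Polynomial.eval_add, Polynomial.eval_X, Polynomial.eval_C]
    ring
  -- extension of the transposed Leibniz rule at the operator value
  have hEQII : (2:ℂ) • m.cmul mu z (br.mul lam x y) = E1 + sgn k i • E2 := by
    refine Extends.unique (fun ν => hTL k i z x hz hx y ν lam) extLHS ?_
    exact hHrep1.add (hFrep1.csmul (sgn k i))
  -- evaluation of (Rn n) at q
  have hRnq : ∀ n : ℕ, (Rn n).eval q = (C ((mu - lam) ^ n) : Polynomial ℂ) := by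
    intro n
    rw [hRndef]
    rw [Polynomial.eval_pow]
    rw [show ((-(C (X : Polynomial ℂ) + (X : Polynomial (Polynomial ℂ)) + C (C lam)))).eval q
        = C (mu - lam) from by
      simp only [Polynomial.eval_neg, Polynomial.eval_add, Polynomial.eval_X,
        Polynomial.eval_C, hqdef]
      rw [map_sub]
      ring]
    rw [← map_pow]
  -- identification of E1
  have hsum1 : ∑ p ∈ Finset.range Nxz, ∑ n ∈ Finset.range NB,
      ((Rn n).eval q) • (lam ^ p • br.coeff n y (m.coeff p x z))
      = br.mul (mu - lam) y (m.mul lam x z) := by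
    have hcoe : ∀ n, br.coeff n y (m.mul lam x z)
        = ∑ p ∈ Finset.range Nxz, lam ^ p • br.coeff n y (m.coeff p x z) := by
      intro n
      rw [m.mul_eq_sum hNxz lam, map_sum]
      exact Finset.sum_congr rfl fun p _ => map_smul _ _ _
    have hbnd : ∀ n, NB ≤ n → br.coeff n y (m.mul lam x z) = 0 := by
      intro n hn
      rw [hcoe n]
      exact Finset.sum_eq_zero fun p hp => by rw [hNB p hp n hn, smul_zero]
    rw [br.mul_eq_sum hbnd (mu - lam), Finset.sum_comm]
    refine Finset.sum_congr rfl fun n _ => ?_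
    rw [hcoe n, Finset.smul_sum]
    refine Finset.sum_congr rfl fun p _ => ?_
    rw [hRnq n, C_smul']
  have hE1' : E1 = (-(sgn k i * sgn (i+k) j)) • br.mul (mu - lam) y (m.mul lam x z) := by
    have h0 := Extends.unique (fun ν => rfl) hHrep1 hHrep2
    rw [h0, hsum1]
  -- identification of E2
  have hE2eq : E2 = sgn k j • br.mul lam x (m.mul (mu - lam) y z) := by
    have h0 := Extends.unique (fun ν => rfl) hFrep1 hFrep2
    rw [h0]
    congr 1
    rw [m.mul_eq_sum hNyz (mu - lam), br.mul_sum_right]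
    refine Finset.sum_congr rfl fun n _ => ?_
    rw [br.mul_smul_right, hRnq n, C_smul']
  -- the two complex-level Leibniz instances
  have hEQB : (2:ℂ) • m.mul lam x (br.mul (mu - lam) y z)
      = br.mul mu (m.mul lam x y) z + sgn i j • br.mul (mu - lam) y (m.mul lam x z) := by
    have h0 := hTL i j x y hx hy z lam (mu - lam)
    rwa [show lam + (mu - lam) = mu from by ring] at h0
  have hEQC : (2:ℂ) • m.mul (mu - lam) y (br.mul lam x z)
      = br.mul mu (m.mul (mu - lam) y x) z + sgn j i • br.mul lam x (m.mul (mu - lam) y z) := by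
    have h0 := hTL j i y x hy hx z (mu - lam) lam
    rwa [show mu - lam + lam = mu from by ring] at h0
  have hP2a : br.mul mu (m.mul (mu - lam) y x) z = sgn j i • br.mul mu (m.mul lam x y) z := by
    rw [hcomm j i y x hy hx (mu - lam), br.mul_smul_left, m.cmul_eq_sum hNxy (mu - lam),
      br.mul_sum_left]
    congr 1
    rw [m.mul_eq_sum hNxy lam, br.mul_sum_left]
    refine Finset.sum_congr rfl fun n _ => ?_
    rw [br.mul_poly_left hbsl, br.mul_smul_left]
    congr 1
    simp only [Polynomial.eval_pow, Polynomial.eval_neg, Polynomial.eval_add,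
      Polynomial.eval_X, Polynomial.eval_C]
    ring
  -- solve for the three products
  have hMCzv : m.cmul mu z (br.mul lam x y) = (2:ℂ)⁻¹ • (E1 + sgn k i • E2) := by
    rw [← hEQII, smul_smul]
    norm_num
  have hBv : m.mul lam x (br.mul (mu - lam) y z) = (2:ℂ)⁻¹ •
      (br.mul mu (m.mul lam x y) z + sgn i j • br.mul (mu - lam) y (m.mul lam x z)) := by
    rw [← hEQB, smul_smul]
    norm_num
  have hCv : m.mul (mu - lam) y (br.mul lam x z) = (2:ℂ)⁻¹ •
      (br.mul mu (m.mul (mu - lam) y x) z + sgn j i • br.mul lam x (m.mul (mu - lam) y z)) := by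
    rw [← hEQC, smul_smul]
    norm_num
  -- final assembly
  rw [hA, hT2, hT3, hMCzv, hE1', hE2eq, hBv, hCv, hP2a]
  simp only [sgn_add_left, sgn_add_right]
  rw [show sgn k i = sgn i k from sgn_comm k i] at *
  simp only [show sgn k i = sgn i k from sgn_comm k i, show sgn k j = sgn j k from sgn_comm k j,
    show sgn j i = sgn i j from sgn_comm j i]
  rcases sgn_cases i j with h1 | h1 <;> rcases sgn_cases i k with h2 | h2 <;>
    rcases sgn_cases j k with h3 | h3 <;> simp only [h1, h2, h3] <;> match_scalars <;> norm_num

end TPCSAFormal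
end
end

section
/- Let (L, ∘_λ, [·_λ ·]) be a transposed Poisson conformal superalgebra. Then for all homogeneous u, v, x, y ∈ L the following identity holds: (−1)^{|v||x|} [(u ∘_λ x)_μ (v ∘_γ y)] + (−1)^{|u|(|x|+|v|)} [(v ∘_γ x)_{γ+μ−λ} (u ∘_λ y)] = 2 (u ∘_λ v) ∘_{λ+γ} [x_{μ−λ} y]. -/
open Polynomial
open scoped TensorProduct

noncomputable section

namespace TPCSAFormal

variable (L : Type*) [AddCommGroup L] [Module ℂ L]
  [Module (Polynomial ℂ) L] [IsScalarTower ℂ (Polynomial ℂ) L]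

variable {L}

lemma ConformalProduct.mul_eq_sum_s5 (m : ConformalProduct L) (lam : ℂ) (a b : L) {N : ℕ}
    (h : ∀ n : ℕ, N ≤ n → m.coeff n a b = 0) :
    m.mul lam a b = ∑ n ∈ Finset.range N, lam ^ n • m.coeff n a b := by
  apply finsum_eq_finset_sum_of_support_subset
  intro n hn
  simp only [Finset.coe_range, Set.mem_Iio]
  by_contra hc
  push_neg at hc
  exact hn (by simp [h n hc])

lemma ConformalProduct.mul_add_right_s5 (m : ConformalProduct L) (lam : ℂ) (a b c : L) :
    m.mul lam a (b + c) = m.mul lam a b + m.mul lam a c := by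
  obtain ⟨N1, h1⟩ := m.coeff_finite a b
  obtain ⟨N2, h2⟩ := m.coeff_finite a c
  rw [m.mul_eq_sum_s5 lam a b (N := max N1 N2) (fun n hn => h1 n (le_trans (le_max_left _ _) hn)),
    m.mul_eq_sum_s5 lam a c (N := max N1 N2) (fun n hn => h2 n (le_trans (le_max_right _ _) hn)),
    m.mul_eq_sum_s5 lam a (b + c) (N := max N1 N2) (fun n hn => by
      rw [map_add, h1 n (le_trans (le_max_left _ _) hn),
        h2 n (le_trans (le_max_right _ _) hn), add_zero]),
    ← Finset.sum_add_distrib]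
  exact Finset.sum_congr rfl fun n _ => by rw [map_add, smul_add]

lemma ConformalProduct.mul_smul_right_s5 (m : ConformalProduct L) (lam : ℂ) (r : ℂ) (a b : L) :
    m.mul lam a (r • b) = r • m.mul lam a b := by
  obtain ⟨N, h⟩ := m.coeff_finite a b
  rw [m.mul_eq_sum_s5 lam a b (N := N) h,
    m.mul_eq_sum_s5 lam a (r • b) (N := N) (fun n hn => by rw [map_smul, h n hn, smul_zero]),
    Finset.smul_sum]
  exact Finset.sum_congr rfl fun n _ => by rw [map_smul, smul_comm]

lemma ConformalProduct.mul_mem {S : SuperModule L} {m : ConformalProduct L}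
    (hm : IsLambdaProduct S m) {i j : ZMod 2} {a b : L}
    (ha : a ∈ S.grade i) (hb : b ∈ S.grade j) (lam : ℂ) :
    m.mul lam a b ∈ S.grade (i + j) := by
  obtain ⟨N, h⟩ := m.coeff_finite a b
  rw [m.mul_eq_sum_s5 lam a b (N := N) h]
  exact Submodule.sum_mem _ fun n _ => Submodule.smul_mem _ _ (hm.even i j a b ha hb n)

lemma sgn_mul_sgn (i j k : ZMod 2) : sgn i k * sgn j k = sgn (i + j) k := by
  have h : ∀ a : ZMod 2, a = 0 ∨ a = 1 := by decide
  rcases h i with hi | hi <;> rcases h j with hj | hj <;> rcases h k with hk | hk <;>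
    subst hi <;> subst hj <;> subst hk <;>
    simp only [sgn, show (1 : ZMod 2) + 1 = 0 by decide, add_zero, zero_add,
      show ZMod.val (0 : ZMod 2) = 0 by decide, show ZMod.val (1 : ZMod 2) = 1 by decide] <;>
    norm_num

/-- the identity (3.19) in a transposed Poisson conformal superalgebra. -/
theorem statement_5 (S : SuperModule L) (m br : ConformalProduct L)
    (hT : IsTPCSA S m br) (iu iv ix iy : ZMod 2) (u v x y : L)
    (hu : u ∈ S.grade iu) (hv : v ∈ S.grade iv) (hx : x ∈ S.grade ix) (hy : y ∈ S.grade iy)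
    (lam mu gam : ℂ) :
    sgn iv ix • br.mul mu (m.mul lam u x) (m.mul gam v y)
      + sgn iu (ix + iv) • br.mul (gam + mu - lam) (m.mul gam v x) (m.mul lam u y)
      = (2 : ℂ) • m.mul (lam + gam) (m.mul lam u v) (br.mul (mu - lam) x y) := by
  set ν := mu - lam with hν
  have hlam_nu : lam + ν = mu := by ring
  have hgam_nu : gam + ν = gam + mu - lam := by ring
  have hlgn : lam + (gam + ν) = lam + gam + ν := by ring
  -- abbreviations
  have hvx : m.mul gam v x ∈ S.grade (iv + ix) := m.mul_mem hT.commAssoc.toIsLambdaProduct hv hx gam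
  have huv : m.mul lam u v ∈ S.grade (iu + iv) := m.mul_mem hT.commAssoc.toIsLambdaProduct hu hv lam
  -- Step 1: Leibniz for v against [x_ν y]
  have H1 := hT.transposedLeibniz iv ix v x hv hx y gam ν
  -- Apply u ∘_lam to both sides of H1
  have E1 : (2 : ℂ) • m.mul lam u (m.mul gam v (br.mul ν x y)) =
      m.mul lam u (br.mul (gam + ν) (m.mul gam v x) y)
        + sgn iv ix • m.mul lam u (br.mul ν x (m.mul gam v y)) := by
    have := congrArg (fun z => m.mul lam u z) H1
    simpa only [m.mul_smul_right_s5, m.mul_add_right_s5] using this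
  -- Step 2: Leibniz for u against [ (vx)_{gam+ν} y ]
  have H2 := hT.transposedLeibniz iu (iv + ix) u (m.mul gam v x) hu hvx y lam (gam + ν)
  -- Step 3: Leibniz for u against [ x_ν (vy) ]
  have H3 := hT.transposedLeibniz iu ix u x hu hx (m.mul gam v y) lam ν
  -- Step 4: Leibniz for uv against [x_ν y]
  have H4 := hT.transposedLeibniz (iu + iv) ix (m.mul lam u v) x huv hx y (lam + gam) ν
  -- associativity facts
  have A1 : m.mul lam u (m.mul gam v x) = m.mul (lam + gam) (m.mul lam u v) x :=
    hT.commAssoc.assoc lam gam u v x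
  have A2 : m.mul lam u (m.mul gam v y) = m.mul (lam + gam) (m.mul lam u v) y :=
    hT.commAssoc.assoc lam gam u v y
  have A3 : m.mul lam u (m.mul gam v (br.mul ν x y)) =
      m.mul (lam + gam) (m.mul lam u v) (br.mul ν x y) :=
    hT.commAssoc.assoc lam gam u v (br.mul ν x y)
  rw [hlgn, A1] at H2
  rw [hlam_nu, A2] at H3
  rw [A3] at E1
  have hs : sgn iv ix * sgn iu ix = sgn (iu + iv) ix := by
    rw [← sgn_mul_sgn]; ring
  have hs2 : sgn iu (ix + iv) = sgn iu (iv + ix) := by rw [add_comm ix iv]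
  rw [← hs] at H4
  rw [hs2, ← hgam_nu]
  linear_combination (norm := module) (-2 : ℂ) • E1 - H2 - sgn iv ix • H3 + H4

end TPCSAFormal
end
end
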